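/- Let Q be a finite quiver without oriented cycles, β a dimension vector, σ ∈ C(Q,β), and let W ∈ Rep(Q,β)^{ss}_σ be σ-polystable. If W' ⊆ W is a subrepresentation with σ(d_{W'}) = 0, then W is isomorphic to W' ⊕ (W/W'). -/

import Mathlib

open scoped BigOperators

namespace QuiverGIT

noncomputable section

variable {Q0 Q1 : Type} [Fintype Q0] [Fintype Q1]

/-- The representation space `Rep(Q,β)` of a quiver with vertex set `Q0`, arrow set `Q1`,
tail map `tl` and head map `hd`, for the dimension vector `β`. -/
abbrev RepSpace (tl hd : Q1 → Q0) (β : Q0 → ℕ) : Type :=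
  ∀ a : Q1, Matrix (Fin (β (hd a))) (Fin (β (tl a))) ℂ

/-- The quiver has no oriented cycles. -/
def NoOrientedCycles (tl hd : Q1 → Q0) : Prop :=
  ∀ (n : ℕ) (c : Fin (n + 1) → Q1),
    (∀ i : Fin n, hd (c i.castSucc) = tl (c i.succ)) → hd (c (Fin.last n)) ≠ tl (c 0)

/-- Pairing `σ(γ) = ∑ σ(x) γ(x)` of a real weight with a dimension vector. -/
def wt (σ : Q0 → ℝ) (γ : Q0 → ℕ) : ℝ := ∑ x, σ x * γ x

/-- The weight has integer coordinates. -/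
def IsIntegralWt (σ : Q0 → ℝ) : Prop := ∀ x, ∃ n : ℤ, σ x = n

variable {tl hd : Q1 → Q0} {β : Q0 → ℕ}

/-- A family of subspaces `S x ≤ ℂ^{β(x)}` is a subrepresentation of `W`. -/
def IsSubrep (W : RepSpace tl hd β) (S : ∀ x, Submodule ℂ (Fin (β x) → ℂ)) : Prop :=
  ∀ a : Q1, ∀ v ∈ S (tl a), (W a).mulVec v ∈ S (hd a)

/-- The dimension vector of a family of subspaces. -/
def dimVec (S : ∀ x : Q0, Submodule ℂ (Fin (β x) → ℂ)) : Q0 → ℕ :=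
  fun x => Module.finrank ℂ (S x)

/-- `W` is `σ`-semi-stable. -/
def Semistable (σ : Q0 → ℝ) (W : RepSpace tl hd β) : Prop :=
  wt σ β = 0 ∧
    ∀ S : ∀ x, Submodule ℂ (Fin (β x) → ℂ), IsSubrep W S → wt σ (dimVec S) ≤ 0

/-- `W` is `σ`-stable. -/
def Stable (σ : Q0 → ℝ) (W : RepSpace tl hd β) : Prop :=
  wt σ β = 0 ∧
    ∀ S : ∀ x, Submodule ℂ (Fin (β x) → ℂ), IsSubrep W S →
      S ≠ (fun _ => ⊥) → S ≠ (fun _ => ⊤) → wt σ (dimVec S) < 0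

/-- The set `Rep(Q,β)^{ss}_σ` of `σ`-semi-stable representations. -/
def ssSet (tl hd : Q1 → Q0) (β : Q0 → ℕ) (σ : Q0 → ℝ) : Set (RepSpace tl hd β) :=
  {W | Semistable σ W}

/-- `β₁ ↪ β` : every `β`-dimensional representation has a subrepresentation of
dimension vector `β₁`. -/
def Embeds (tl hd : Q1 → Q0) (β β₁ : Q0 → ℕ) : Prop :=
  ∀ W : RepSpace tl hd β, ∃ S : ∀ x, Submodule ℂ (Fin (β x) → ℂ),
    IsSubrep W S ∧ ∀ x, Module.finrank ℂ (S x) = β₁ x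

/-- The cone `C(Q,β)` of effective weights. -/
def EffCone (tl hd : Q1 → Q0) (β : Q0 → ℕ) : Set (Q0 → ℝ) :=
  {σ | wt σ β = 0 ∧ ∀ β₁ : Q0 → ℕ, Embeds tl hd β β₁ → wt σ β₁ ≤ 0}

/-- The action of `GL(β) = ∏ GL(β(x))` on `Rep(Q,β)` by simultaneous conjugation. -/
def glAct (g : ∀ x, GL (Fin (β x)) ℂ) (W : RepSpace tl hd β) : RepSpace tl hd β :=
  fun a => (g (hd a)).val * W a * ((g (tl a))⁻¹).val

/-- The `GL(β)`-orbit of `W`. -/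
def glOrbit (W : RepSpace tl hd β) : Set (RepSpace tl hd β) :=
  {V | ∃ g, V = glAct g W}

/-- The coordinates of a point of `Rep(Q,β)`. -/
def coordFn (W : RepSpace tl hd β) : (Σ a : Q1, Fin (β (hd a)) × Fin (β (tl a))) → ℂ :=
  fun p => W p.1 p.2.1 p.2.2

/-- The Zariski closure of a subset of `Rep(Q,β)`: the set of points where every
polynomial vanishing on the subset vanishes. -/
def zClosure (Z : Set (RepSpace tl hd β)) : Set (RepSpace tl hd β) :=
  {V | ∀ p : MvPolynomial ((a : Q1) × (Fin (β (hd a)) × Fin (β (tl a)))) ℂ,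
      (∀ U ∈ Z, MvPolynomial.eval (coordFn U) p = 0) →
        MvPolynomial.eval (coordFn V) p = 0}

/-- `W` is `σ`-polystable : it is `σ`-semi-stable and its `GL(β)`-orbit is
(Zariski) closed in `Rep(Q,β)^{ss}_σ`. -/
def Polystable (σ : Q0 → ℝ) (W : RepSpace tl hd β) : Prop :=
  Semistable σ W ∧ zClosure (glOrbit W) ∩ ssSet tl hd β σ = glOrbit W

/-- The orbit cone `Ω(W)` of a representation `W`. -/
def OmegaCone (W : RepSpace tl hd β) : Set (Q0 → ℝ) :=
  {σ | Semistable σ W}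

/-- The GIT-cone `C(σ) = {σ' ∈ ℝ^{Q_0} : Rep(Q,β)^{ss}_σ ⊆ Rep(Q,β)^{ss}_{σ'}}`. -/
def gitCone (tl hd : Q1 → Q0) (β : Q0 → ℕ) (σ : Q0 → ℝ) : Set (Q0 → ℝ) :=
  {σ' | ssSet tl hd β σ ⊆ ssSet tl hd β σ'}

/-- The GIT-cone `C(σ) = {σ' ∈ C(Q,β) : Rep(Q,β)^{ss}_σ ⊆ Rep(Q,β)^{ss}_{σ'}}`. -/
def gitConeE (tl hd : Q1 → Q0) (β : Q0 → ℕ) (σ : Q0 → ℝ) : Set (Q0 → ℝ) :=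
  {σ' | σ' ∈ EffCone tl hd β ∧ ssSet tl hd β σ ⊆ ssSet tl hd β σ'}

/-- A rational convex polyhedral cone in `ℝ^{Q_0}` : a set cut out by finitely many
homogeneous linear inequalities with rational coefficients. -/
def IsRatPolyCone (C : Set (Q0 → ℝ)) : Prop :=
  ∃ s : Finset (Q0 → ℚ), C = {σ | ∀ v ∈ s, (∑ x, σ x * (v x : ℝ)) ≤ 0}

/-- `F` is a face of the cone `C`, cut out by a supporting linear functional. -/
def IsFaceOf (F C : Set (Q0 → ℝ)) : Prop :=
  ∃ ℓ : (Q0 → ℝ) →ₗ[ℝ] ℝ, (∀ σ ∈ C, ℓ σ ≤ 0) ∧ F = {σ ∈ C | ℓ σ = 0}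

/-- The restriction of `W` to the subrepresentation `T` is a `σ`-stable representation
(subrepresentations of `W|_T` are exactly the subrepresentations of `W` contained in `T`). -/
def IsStableOn (σ : Q0 → ℝ) (W : RepSpace tl hd β)
    (T : ∀ x, Submodule ℂ (Fin (β x) → ℂ)) : Prop :=
  wt σ (dimVec T) = 0 ∧
    ∀ U : ∀ x, Submodule ℂ (Fin (β x) → ℂ), IsSubrep W U → (∀ x, U x ≤ T x) →
      U ≠ (fun _ => ⊥) → U ≠ T → wt σ (dimVec U) < 0

/-- `W` is a direct sum of `σ`-stable representations : `ℂ^β` decomposes as an internal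
direct sum of subrepresentations on each of which `W` restricts to a `σ`-stable
representation. -/
def IsDirectSumOfStables (σ : Q0 → ℝ) (W : RepSpace tl hd β) : Prop :=
  ∃ (n : ℕ) (T : Fin n → ∀ x, Submodule ℂ (Fin (β x) → ℂ)),
    (∀ i, IsSubrep W (T i)) ∧
    (∀ x, iSupIndep fun i => T i x) ∧
    (∀ x, (⨆ i, T i x) = ⊤) ∧
    ∀ i, IsStableOn σ W (T i)

/-- The factor `T/S` of two nested subrepresentations `S ≤ T` of `W` is a `σ`-stable
representation (subrepresentations of `T/S` correspond to intermediate
subrepresentations `S ≤ U ≤ T` of `W`, with `d_{U/S} = d_U - d_S`). -/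
def FactorStable (σ : Q0 → ℝ) (W : RepSpace tl hd β)
    (S T : ∀ x, Submodule ℂ (Fin (β x) → ℂ)) : Prop :=
  wt σ (dimVec T) - wt σ (dimVec S) = 0 ∧
    ∀ U : ∀ x, Submodule ℂ (Fin (β x) → ℂ), IsSubrep W U →
      (∀ x, S x ≤ U x) → (∀ x, U x ≤ T x) → U ≠ S → U ≠ T →
        wt σ (dimVec U) - wt σ (dimVec S) < 0

/-- A Jordan–Hölder filtration `0 = W_0 ⊊ W_1 ⊊ ⋯ ⊊ W_l = W` of `W` in the category of
`σ`-semi-stable representations: all factors `W_i/W_{i-1}` are `σ`-stable. -/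
def IsJHFiltration (σ : Q0 → ℝ) (W : RepSpace tl hd β) (l : ℕ)
    (S : Fin (l + 1) → ∀ x, Submodule ℂ (Fin (β x) → ℂ)) : Prop :=
  (∀ i, IsSubrep W (S i)) ∧
  (∀ x, S 0 x = ⊥) ∧
  (∀ x, S (Fin.last l) x = ⊤) ∧
  (∀ i : Fin l, ∀ x, S i.castSucc x ≤ S i.succ x) ∧
  (∀ i : Fin l, S i.castSucc ≠ S i.succ) ∧
  (∀ i : Fin l, FactorStable σ W (S i.castSucc) (S i.succ))

/-- `V` is isomorphic to the associated graded representation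
`⊕_{i=1}^{l} S_i/S_{i-1}` of the filtration `S` of `W` : there are linear maps
`f i x : ℂ^{β(x)} → ℂ^{β(x)}` which vanish on `S_{i-1}`, are injective on `S_i`
modulo `S_{i-1}`, intertwine `W` and `V` on `S_i`, and whose images decompose
`ℂ^{β(x)}` as an internal direct sum. -/
def IsGradedIso (W V : RepSpace tl hd β) (l : ℕ)
    (S : Fin (l + 1) → ∀ x, Submodule ℂ (Fin (β x) → ℂ)) : Prop :=
  ∃ f : Fin l → ∀ x, (Fin (β x) → ℂ) →ₗ[ℂ] (Fin (β x) → ℂ),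
    (∀ (i : Fin l) (x : Q0), ∀ v ∈ S i.castSucc x, f i x v = 0) ∧
    (∀ (i : Fin l) (x : Q0), ∀ v ∈ S i.succ x, f i x v = 0 → v ∈ S i.castSucc x) ∧
    (∀ (i : Fin l) (a : Q1), ∀ v ∈ S i.succ (tl a),
      f i (hd a) ((W a).mulVec v) = (V a).mulVec (f i (tl a) v)) ∧
    (∀ x : Q0, iSupIndep fun i : Fin l => (S i.succ x).map (f i x)) ∧
    (∀ x : Q0, (⨆ i : Fin l, (S i.succ x).map (f i x)) = ⊤)

/-! ### Auxiliary material for the proof of `polystable_summand_splits` -/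

set_option linter.unusedSectionVars false

section AuxSplit

abbrev EndF (β : Q0 → ℕ) := ∀ x : Q0, (Fin (β x) → ℂ) →ₗ[ℂ] (Fin (β x) → ℂ)

abbrev RepF (tl hd : Q1 → Q0) (β : Q0 → ℕ) :=
  ∀ a : Q1, (Fin (β (tl a)) → ℂ) →ₗ[ℂ] (Fin (β (hd a)) → ℂ)

/-- A generic submodule of "twisted intertwining" families of endomorphisms. -/
def twistSub (ι : Type) (l r : ι → Q0)
    (A B : ∀ i, (Fin (β (l i)) → ℂ) →ₗ[ℂ] (Fin (β (r i)) → ℂ)) :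
    Submodule ℂ (EndF β) where
  carrier := {F | ∀ i, F (r i) ∘ₗ A i = B i ∘ₗ F (l i)}
  zero_mem' := by intro i; simp
  add_mem' := by
    intro F G hF hG i
    simp only [Pi.add_apply, LinearMap.add_comp, LinearMap.comp_add, hF i, hG i]
  smul_mem' := by
    intro c F hF i
    simp only [Pi.smul_apply, LinearMap.smul_comp, LinearMap.comp_smul, hF i]

theorem mem_twistSub {ι : Type} {l r : ι → Q0}
    {A B : ∀ i, (Fin (β (l i)) → ℂ) →ₗ[ℂ] (Fin (β (r i)) → ℂ)} {F : EndF β} :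
    F ∈ twistSub ι l r A B ↔ ∀ i, F (r i) ∘ₗ A i = B i ∘ₗ F (l i) := Iff.rfl

/-- `Ps` is a family of projections onto the subspaces `Sm`. -/
def IsProjOn (Sm : ∀ x : Q0, Submodule ℂ (Fin (β x) → ℂ)) (Ps : EndF β) : Prop :=
  (∀ x v, Ps x v ∈ Sm x) ∧ (∀ x, ∀ v ∈ Sm x, Ps x v = v)

/-- The complementary family of projections. -/
def PcOf (Ps : EndF β) : EndF β := fun x => LinearMap.id - Ps x

section Proj
variable {Sm : ∀ x : Q0, Submodule ℂ (Fin (β x) → ℂ)} {Ps : EndF β}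

theorem pc_apply (x : Q0) (v) : PcOf Ps x v = v - Ps x v := rfl

theorem pc_eq_zero_iff (hP : IsProjOn Sm Ps) (x v) : PcOf Ps x v = 0 ↔ v ∈ Sm x := by
  rw [pc_apply, sub_eq_zero]
  constructor
  · intro h; rw [h]; exact hP.1 x v
  · intro h; rw [hP.2 x v h]

theorem ps_pc (hP : IsProjOn Sm Ps) (x v) : Ps x (PcOf Ps x v) = 0 := by
  rw [pc_apply, map_sub, hP.2 x _ (hP.1 x v), sub_self]

theorem pc_ps (hP : IsProjOn Sm Ps) (x v) : PcOf Ps x (Ps x v) = 0 := by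
  rw [pc_eq_zero_iff hP]; exact hP.1 x v

theorem pc_pc (hP : IsProjOn Sm Ps) (x v) : PcOf Ps x (PcOf Ps x v) = PcOf Ps x v := by
  rw [pc_apply x (PcOf Ps x v), ps_pc hP, sub_zero]

theorem ps_ps (hP : IsProjOn Sm Ps) (x v) : Ps x (Ps x v) = Ps x v :=
  hP.2 x _ (hP.1 x v)

theorem ps_add_pc (x : Q0) (v) : Ps x v + PcOf Ps x v = v := by rw [pc_apply]; ring

variable (Ps) in
/-- The block-diagonal degeneration of `L`. -/
def L0of (L : RepF tl hd β) : RepF tl hd β := fun a =>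
  Ps (hd a) ∘ₗ L a ∘ₗ Ps (tl a) + PcOf Ps (hd a) ∘ₗ L a ∘ₗ PcOf Ps (tl a)

variable {L : RepF tl hd β}

theorem L0_apply (a v) :
    L0of Ps L a v = Ps (hd a) (L a (Ps (tl a) v)) + PcOf Ps (hd a) (L a (PcOf Ps (tl a) v)) := rfl

variable (hP : IsProjOn Sm Ps) (hL : ∀ a, ∀ v ∈ Sm (tl a), L a v ∈ Sm (hd a))
include hP hL

theorem pcLps (a v) : PcOf Ps (hd a) (L a (Ps (tl a) v)) = 0 := by
  rw [pc_eq_zero_iff hP]; exact hL a _ (hP.1 _ v)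

theorem L0_eq_on (a v) (hv : v ∈ Sm (tl a)) : L0of Ps L a v = L a v := by
  have h1 : Ps (tl a) v = v := hP.2 _ v hv
  have h2 : PcOf Ps (tl a) v = 0 := (pc_eq_zero_iff hP _ v).2 hv
  rw [L0_apply, h1, h2, map_zero, map_zero, add_zero, hP.2 _ _ (hL a v hv)]

theorem ps_L0 (a v) : Ps (hd a) (L0of Ps L a v) = L0of Ps L a (Ps (tl a) v) := by
  simp only [L0_apply, map_add, ps_ps hP, ps_pc hP, pc_ps hP, pc_pc hP, map_zero,
    add_zero, zero_add]

theorem pc_L0 (a v) : PcOf Ps (hd a) (L0of Ps L a v) = L0of Ps L a (PcOf Ps (tl a) v) := by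
  simp only [L0_apply, map_add, ps_ps hP, ps_pc hP, pc_ps hP, pc_pc hP, map_zero,
    add_zero, zero_add]

theorem pc_L (a v) : PcOf Ps (hd a) (L a v) = L0of Ps L a (PcOf Ps (tl a) v) := by
  conv_lhs => rw [← ps_add_pc (Ps := Ps) (tl a) v]
  simp only [map_add, pcLps hP hL, zero_add, L0_apply, ps_ps hP, ps_pc hP, pc_ps hP,
    pc_pc hP, map_zero, add_zero]

theorem L_ps (a v) : L a (Ps (tl a) v) = L0of Ps L a (Ps (tl a) v) := by
  rw [L0_eq_on hP hL a _ (hP.1 _ v)]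

end Proj

/-- The linear-map version of a matrix representation. -/
def linOf (W : RepSpace tl hd β) : RepF tl hd β := fun a => Matrix.toLin' (W a)

/-- The matrix version of a linear-map representation. -/
def matOf (L : RepF tl hd β) : RepSpace tl hd β := fun a => LinearMap.toMatrix' (L a)

theorem mulVec_linOf {W : RepSpace tl hd β} (a v) : (W a).mulVec v = linOf W a v :=
  (Matrix.toLin'_apply _ _).symm

theorem mulVec_matOf {L : RepF tl hd β} (a v) : (matOf L a).mulVec v = L a v := by
  rw [← Matrix.toLin'_apply, matOf, Matrix.toLin'_toMatrix']

theorem matOf_linOf (W : RepSpace tl hd β) : matOf (linOf W) = W := by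
  funext a; exact LinearMap.toMatrix'_toLin' (W a)

end AuxSplit


section AuxZariski
variable {Sm : ∀ x : Q0, Submodule ℂ (Fin (β x) → ℂ)} {Ps : EndF β}

/-- The degenerate representation lies in the Zariski closure of the orbit. -/
theorem matOf_L0_mem_zClosure (W : RepSpace tl hd β)
    (hP : IsProjOn Sm Ps) (hS : IsSubrep W Sm) :
    matOf (L0of Ps (linOf W)) ∈ zClosure (glOrbit W) := by
  classical
  set L : RepF tl hd β := linOf W with hLdef
  have hL : ∀ a, ∀ v ∈ Sm (tl a), L a v ∈ Sm (hd a) := by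
    intro a v hv
    have := hS a v hv
    rwa [mulVec_linOf] at this
  set W0 : RepSpace tl hd β := matOf (L0of Ps L) with hW0def
  set M1 : RepSpace tl hd β :=
    fun a => LinearMap.toMatrix' (Ps (hd a) ∘ₗ L a ∘ₗ PcOf Ps (tl a)) with hM1def
  -- for each t ≠ 0 the matrix family `W0 + t • M1` is in the orbit
  have horb : ∀ t : ℂ, t ≠ 0 → (fun a => W0 a + t • M1 a) ∈ glOrbit W := by
    intro t ht
    have keycomp : ∀ (s u : ℂ), s * u = 1 → ∀ x : Q0,
        (s • Ps x + PcOf Ps x) ∘ₗ (u • Ps x + PcOf Ps x) = LinearMap.id := by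
      intro s u hsu x
      apply LinearMap.ext
      intro v
      simp only [LinearMap.comp_apply, LinearMap.add_apply, LinearMap.smul_apply,
        LinearMap.id_apply, map_add, map_smul, ps_ps hP, ps_pc hP, pc_ps hP, pc_pc hP,
        smul_smul, smul_zero, add_zero, zero_add]
      rw [mul_comm u s, hsu, one_smul, ps_add_pc]
    set g : ∀ x, GL (Fin (β x)) ℂ := fun x =>
      ⟨LinearMap.toMatrix' (t • Ps x + PcOf Ps x),
       LinearMap.toMatrix' (t⁻¹ • Ps x + PcOf Ps x),
       by rw [← LinearMap.toMatrix'_comp, keycomp t t⁻¹ (mul_inv_cancel₀ ht) x,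
         LinearMap.toMatrix'_id],
       by rw [← LinearMap.toMatrix'_comp, keycomp t⁻¹ t (inv_mul_cancel₀ ht) x,
         LinearMap.toMatrix'_id]⟩ with hgdef
    refine ⟨g, ?_⟩
    funext a
    show W0 a + t • M1 a = (g (hd a)).val * W a * ((g (tl a))⁻¹).val
    have hginv : ((g (tl a))⁻¹).val = LinearMap.toMatrix' (t⁻¹ • Ps (tl a) + PcOf Ps (tl a)) := rfl
    have hgval : (g (hd a)).val = LinearMap.toMatrix' (t • Ps (hd a) + PcOf Ps (hd a)) := rfl
    have hWa : W a = LinearMap.toMatrix' (L a) := by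
      rw [hLdef]; exact (LinearMap.toMatrix'_toLin' (W a)).symm
    rw [hginv, hgval, hWa, ← LinearMap.toMatrix'_comp, ← LinearMap.toMatrix'_comp]
    have : W0 a + t • M1 a =
        LinearMap.toMatrix' (L0of Ps L a + t • (Ps (hd a) ∘ₗ L a ∘ₗ PcOf Ps (tl a))) := by
      rw [map_add, map_smul]; rfl
    rw [this]
    congr 1
    apply LinearMap.ext
    intro v
    simp only [LinearMap.comp_apply, LinearMap.add_apply, LinearMap.smul_apply,
      map_add, map_smul, smul_smul, mul_inv_cancel₀ ht, one_smul,
      pcLps hP hL, smul_zero, add_zero, L0_apply]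
    match_scalars <;> field_simp
  intro p hp
  set q : Polynomial ℂ := MvPolynomial.eval₂ Polynomial.C
    (fun idx => Polynomial.C (W0 idx.1 idx.2.1 idx.2.2) +
      Polynomial.X * Polynomial.C (M1 idx.1 idx.2.1 idx.2.2)) p with hqdef
  have hq : ∀ t : ℂ, q.eval t =
      MvPolynomial.eval (coordFn (fun a => W0 a + t • M1 a)) p := by
    intro t
    have h1 : q.eval t = (Polynomial.evalRingHom t) q := rfl
    rw [h1, hqdef, MvPolynomial.eval₂_comp_left (Polynomial.evalRingHom t)]
    have h2 : (Polynomial.evalRingHom t).comp Polynomial.C = RingHom.id ℂ := by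
      ext a; simp
    rw [h2]
    have h3 : ((Polynomial.evalRingHom t) ∘ fun idx =>
        Polynomial.C (W0 idx.1 idx.2.1 idx.2.2) +
          Polynomial.X * Polynomial.C (M1 idx.1 idx.2.1 idx.2.2)) =
        coordFn (fun a => W0 a + t • M1 a) := by
      funext idx
      simp [coordFn, Matrix.add_apply, Matrix.smul_apply, smul_eq_mul]
      try ring
    rw [h3]
    rfl
  have hq0 : q = 0 := by
    apply Polynomial.eq_zero_of_infinite_isRoot
    apply Set.Infinite.mono (s := ({0}ᶜ : Set ℂ))
    · intro t ht
      have : q.eval t = 0 := by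
        rw [hq t]
        exact hp _ (horb t (by simpa using ht))
      exact this
    · exact Set.Finite.infinite_compl (Set.finite_singleton 0)
  have : MvPolynomial.eval (coordFn (fun a => W0 a + (0 : ℂ) • M1 a)) p = 0 := by
    rw [← hq 0, hq0, Polynomial.eval_zero]
  simpa using this
end AuxZariski


section AuxSS
variable {Sm : ∀ x : Q0, Submodule ℂ (Fin (β x) → ℂ)} {Ps : EndF β}

theorem semistable_L0 (σ : Q0 → ℝ) (W : RepSpace tl hd β) (hWss : Semistable σ W)
    (hP : IsProjOn Sm Ps) (hS : IsSubrep W Sm) (hS0 : wt σ (dimVec Sm) = 0) :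
    Semistable σ (matOf (L0of Ps (linOf W))) := by
  classical
  set L : RepF tl hd β := linOf W with hLdef
  have hL : ∀ a, ∀ v ∈ Sm (tl a), L a v ∈ Sm (hd a) := by
    intro a v hv
    have := hS a v hv
    rwa [mulVec_linOf] at this
  refine ⟨hWss.1, ?_⟩
  intro U hU
  have hU' : ∀ a, ∀ v ∈ U (tl a), L0of Ps L a v ∈ U (hd a) := by
    intro a v hv
    have := hU a v hv
    rwa [mulVec_matOf] at this
  have hU1 : IsSubrep W (fun x => U x ⊓ Sm x) := by
    intro a v hv
    rw [Submodule.mem_inf] at hv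
    rw [mulVec_linOf]
    rw [Submodule.mem_inf]
    constructor
    · have := hU' a v hv.1
      rwa [L0_eq_on hP hL a v hv.2] at this
    · exact hL a v hv.2
  have hU2 : IsSubrep W (fun x => U x ⊔ Sm x) := by
    intro a v hv
    rw [Submodule.mem_sup] at hv
    obtain ⟨u, hu, s, hs, rfl⟩ := hv
    rw [mulVec_linOf, Submodule.mem_sup]
    refine ⟨L0of Ps L a u, hU' a u hu, (L a u - L0of Ps L a u) + L a s, ?_, by rw [← hLdef, map_add]; abel⟩
    apply Submodule.add_mem
    · rw [← pc_eq_zero_iff hP, map_sub, pc_L hP hL, pc_L0 hP hL, sub_self]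
    · exact hL a s hs
  have hsum : wt σ (dimVec (fun x => U x ⊔ Sm x)) + wt σ (dimVec (fun x => U x ⊓ Sm x))
      = wt σ (dimVec U) + wt σ (dimVec Sm) := by
    unfold wt dimVec
    rw [← Finset.sum_add_distrib, ← Finset.sum_add_distrib]
    apply Finset.sum_congr rfl
    intro x _
    have h := Submodule.finrank_sup_add_finrank_inf_eq (U x) (Sm x)
    have h' : ((Module.finrank ℂ ↥(U x ⊔ Sm x) : ℝ)) + (Module.finrank ℂ ↥(U x ⊓ Sm x) : ℝ)
        = (Module.finrank ℂ ↥(U x) : ℝ) + (Module.finrank ℂ ↥(Sm x) : ℝ) := by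
      exact_mod_cast h
    linear_combination σ x * h'
  have t1 := hWss.2 _ hU1
  have t2 := hWss.2 _ hU2
  linarith
end AuxSS


section AbstractCount

open Module in
theorem abstract_count {K M : Type*} [Field K] [AddCommGroup M] [Module K M]
    [FiniteDimensional K M] (A C B W0 : Submodule K M) (Φ : M →ₗ[K] M)
    (hinf : A ⊓ C = ⊥) (hsup : A ⊔ C = W0)
    (hBW0 : finrank K B = finrank K W0)
    (hΦB : ∀ F ∈ B, Φ F ∈ C)
    (hker1 : ∀ F ∈ B, Φ F = 0 → F ∈ A)
    (hker2 : ∀ F ∈ A, F ∈ B ∧ Φ F = 0)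
    (c : M) (hc : c ∈ C) : ∃ F ∈ B, Φ F = c := by
  set φ := Φ.domRestrict B with hφ
  have hrange_le : LinearMap.range φ ≤ C := by
    rintro _ ⟨⟨F, hF⟩, rfl⟩
    exact hΦB F hF
  have hker : Submodule.map B.subtype (LinearMap.ker φ) = A := by
    apply le_antisymm
    · rintro _ ⟨⟨F, hFB⟩, hFk, rfl⟩
      simp only [SetLike.mem_coe, LinearMap.mem_ker, hφ, LinearMap.domRestrict_apply] at hFk
      exact hker1 F hFB hFk
    · intro F hF
      obtain ⟨hFB, hF0⟩ := hker2 F hF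
      rw [Submodule.mem_map]
      exact ⟨⟨F, hFB⟩, by simpa [hφ] using hF0, rfl⟩
  have hfinW0 : finrank K W0 = finrank K A + finrank K C := by
    have := Submodule.finrank_sup_add_finrank_inf_eq A C
    rw [hsup, hinf] at this
    simpa using this
  have hkerrank : finrank K (LinearMap.ker φ) = finrank K A := by
    rw [← hker]
    exact (Submodule.finrank_map_subtype_eq B (LinearMap.ker φ)).symm
  have hrank := LinearMap.finrank_range_add_finrank_ker φ
  have hrangerank : finrank K (LinearMap.range φ) = finrank K C := by
    rw [hkerrank, hBW0, hfinW0] at hrank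
    omega
  have hrange : LinearMap.range φ = C :=
    Submodule.eq_of_le_of_finrank_le hrange_le (le_of_eq hrangerank.symm)
  have : c ∈ LinearMap.range φ := hrange ▸ hc
  obtain ⟨⟨F, hFB⟩, hF⟩ := this
  exact ⟨F, hFB, hF⟩
end AbstractCount


section AuxHom
variable {Sm : ∀ x : Q0, Submodule ℂ (Fin (β x) → ℂ)} {Ps : EndF β}

set_option maxHeartbeats 1000000 in
set_option synthInstance.maxHeartbeats 1000000 in
theorem exists_splitting_hom (hP : IsProjOn Sm Ps) {L : RepF tl hd β}
    (hL : ∀ a, ∀ v ∈ Sm (tl a), L a v ∈ Sm (hd a))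
    (G Gi : EndF β) (hGGi : ∀ x, G x ∘ₗ Gi x = LinearMap.id)
    (hGiG : ∀ x, Gi x ∘ₗ G x = LinearMap.id)
    (hconj : ∀ a, L0of Ps L a = G (hd a) ∘ₗ L a ∘ₗ Gi (tl a)) :
    ∃ F : EndF β, (∀ x, F x ∘ₗ Ps x = 0) ∧
      (∀ a, F (hd a) ∘ₗ L0of Ps L a = L a ∘ₗ F (tl a)) ∧
      (∀ x, PcOf Ps x ∘ₗ F x = PcOf Ps x) := by
  classical
  -- composition versions of the basic projection identities
  have cps_ps : ∀ x, Ps x ∘ₗ Ps x = Ps x := fun x => LinearMap.ext (ps_ps hP x)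
  have cps_pc : ∀ x, Ps x ∘ₗ PcOf Ps x = 0 := fun x => LinearMap.ext (ps_pc hP x)
  have cpc_ps : ∀ x, PcOf Ps x ∘ₗ Ps x = 0 := fun x => LinearMap.ext (pc_ps hP x)
  have cpc_pc : ∀ x, PcOf Ps x ∘ₗ PcOf Ps x = PcOf Ps x := fun x => LinearMap.ext (pc_pc hP x)
  have cps_L0 : ∀ a, Ps (hd a) ∘ₗ L0of Ps L a = L0of Ps L a ∘ₗ Ps (tl a) :=
    fun a => LinearMap.ext (ps_L0 hP hL a)
  have cpc_L0 : ∀ a, PcOf Ps (hd a) ∘ₗ L0of Ps L a = L0of Ps L a ∘ₗ PcOf Ps (tl a) :=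
    fun a => LinearMap.ext (pc_L0 hP hL a)
  have cpc_L : ∀ a, PcOf Ps (hd a) ∘ₗ L a = L0of Ps L a ∘ₗ PcOf Ps (tl a) :=
    fun a => LinearMap.ext (pc_L hP hL a)
  have cL_ps : ∀ a, L a ∘ₗ Ps (tl a) = L0of Ps L a ∘ₗ Ps (tl a) :=
    fun a => LinearMap.ext (L_ps hP hL a)
  have cL_G : ∀ a, G (hd a) ∘ₗ L a = L0of Ps L a ∘ₗ G (tl a) := by
    intro a
    rw [hconj a, LinearMap.comp_assoc, LinearMap.comp_assoc, hGiG, LinearMap.comp_id]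
  have cL0_Gi : ∀ a, Gi (hd a) ∘ₗ L0of Ps L a = L a ∘ₗ Gi (tl a) := by
    intro a
    rw [hconj a, ← LinearMap.comp_assoc, ← LinearMap.comp_assoc, hGiG, LinearMap.id_comp]
  -- the four Hom-submodules
  set homKills : Submodule ℂ (EndF β) := twistSub Q0 id id Ps (fun _ => 0) with hk_def
  set killPc : Submodule ℂ (EndF β) := twistSub Q0 id id (fun _ => 0) (PcOf Ps) with hkpc_def
  set killPs : Submodule ℂ (EndF β) := twistSub Q0 id id (fun _ => 0) Ps with hkps_def
  have mem_homKills : ∀ F : EndF β, F ∈ homKills ↔ ∀ x, F x ∘ₗ Ps x = 0 := by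
    intro F
    rw [hk_def, mem_twistSub]
    simp [LinearMap.zero_comp]
  have mem_killPc : ∀ F : EndF β, F ∈ killPc ↔ ∀ x, PcOf Ps x ∘ₗ F x = 0 := by
    intro F
    rw [hkpc_def, mem_twistSub]
    simp only [LinearMap.comp_zero, id_eq]
    exact ⟨fun h x => (h x).symm, fun h x => (h x).symm⟩
  have mem_killPs : ∀ F : EndF β, F ∈ killPs ↔ ∀ x, Ps x ∘ₗ F x = 0 := by
    intro F
    rw [hkps_def, mem_twistSub]
    simp only [LinearMap.comp_zero, id_eq]
    exact ⟨fun h x => (h x).symm, fun h x => (h x).symm⟩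
  set homW0 : Submodule ℂ (EndF β) :=
    homKills ⊓ twistSub Q1 tl hd (L0of Ps L) (L0of Ps L) with hw0_def
  set homB : Submodule ℂ (EndF β) :=
    homKills ⊓ twistSub Q1 tl hd (L0of Ps L) L with hb_def
  set homA : Submodule ℂ (EndF β) :=
    (homKills ⊓ killPc) ⊓ twistSub Q1 tl hd (L0of Ps L) (L0of Ps L) with ha_def
  set homC : Submodule ℂ (EndF β) :=
    (homKills ⊓ killPs) ⊓ twistSub Q1 tl hd (L0of Ps L) (L0of Ps L) with hc_def
  have mem_homW0 : ∀ F : EndF β, F ∈ homW0 ↔ (∀ x, F x ∘ₗ Ps x = 0) ∧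
      ∀ a, F (hd a) ∘ₗ L0of Ps L a = L0of Ps L a ∘ₗ F (tl a) := by
    intro F
    rw [hw0_def, Submodule.mem_inf, mem_homKills, mem_twistSub]
  have mem_homB : ∀ F : EndF β, F ∈ homB ↔ (∀ x, F x ∘ₗ Ps x = 0) ∧
      ∀ a, F (hd a) ∘ₗ L0of Ps L a = L a ∘ₗ F (tl a) := by
    intro F
    rw [hb_def, Submodule.mem_inf, mem_homKills, mem_twistSub]
  have mem_homA : ∀ F : EndF β, F ∈ homA ↔ ((∀ x, F x ∘ₗ Ps x = 0) ∧
      (∀ x, PcOf Ps x ∘ₗ F x = 0)) ∧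
      ∀ a, F (hd a) ∘ₗ L0of Ps L a = L0of Ps L a ∘ₗ F (tl a) := by
    intro F
    rw [ha_def, Submodule.mem_inf, Submodule.mem_inf, mem_homKills, mem_killPc, mem_twistSub]
  have mem_homC : ∀ F : EndF β, F ∈ homC ↔ ((∀ x, F x ∘ₗ Ps x = 0) ∧
      (∀ x, Ps x ∘ₗ F x = 0)) ∧
      ∀ a, F (hd a) ∘ₗ L0of Ps L a = L0of Ps L a ∘ₗ F (tl a) := by
    intro F
    rw [hc_def, Submodule.mem_inf, Submodule.mem_inf, mem_homKills, mem_killPs, mem_twistSub]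
  -- a map with values in `Sm` is intertwined the same way by `L` and `L0`
  have valS_key : ∀ (F : EndF β), (∀ x, PcOf Ps x ∘ₗ F x = 0) →
      ∀ a, L a ∘ₗ F (tl a) = L0of Ps L a ∘ₗ F (tl a) := by
    intro F hF a
    have h1 : F (tl a) = Ps (tl a) ∘ₗ F (tl a) := by
      apply LinearMap.ext
      intro v
      have := congrArg (fun (f : _ →ₗ[ℂ] _) => f v) (hF (tl a))
      simp only [LinearMap.comp_apply, LinearMap.zero_apply, pc_apply, sub_eq_zero] at this ⊢
      exact this
    rw [h1, ← LinearMap.comp_assoc, ← LinearMap.comp_assoc, cL_ps]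
  -- step 1 : homA ⊓ homC = ⊥
  have hinf : homA ⊓ homC = ⊥ := by
    rw [Submodule.eq_bot_iff]
    intro F hF
    rw [Submodule.mem_inf, mem_homA, mem_homC] at hF
    funext x
    apply LinearMap.ext
    intro v
    have h1 := congrArg (fun (f : _ →ₗ[ℂ] _) => f v) (hF.1.1.2 x)
    have h2 := congrArg (fun (f : _ →ₗ[ℂ] _) => f v) (hF.2.1.2 x)
    simp only [LinearMap.comp_apply, LinearMap.zero_apply] at h1 h2
    have := ps_add_pc (Ps := Ps) x (F x v)
    rw [h1, h2, add_zero] at this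
    simp [← this]
  -- step 2 : homA ⊔ homC = homW0
  have hsup : homA ⊔ homC = homW0 := by
    apply le_antisymm
    · apply sup_le
      · intro F hF
        rw [mem_homA] at hF
        rw [mem_homW0]
        exact ⟨hF.1.1, hF.2⟩
      · intro F hF
        rw [mem_homC] at hF
        rw [mem_homW0]
        exact ⟨hF.1.1, hF.2⟩
    · intro F hF
      rw [mem_homW0] at hF
      have hFeq : F = (fun x => Ps x ∘ₗ F x) + fun x => PcOf Ps x ∘ₗ F x := by
        funext x
        apply LinearMap.ext
        intro v
        simp only [Pi.add_apply, LinearMap.add_apply, LinearMap.comp_apply]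
        exact (ps_add_pc x (F x v)).symm
      rw [hFeq]
      apply Submodule.add_mem
      · apply Submodule.mem_sup_left
        rw [mem_homA]
        refine ⟨⟨?_, ?_⟩, ?_⟩
        · intro x
          rw [LinearMap.comp_assoc, hF.1 x, LinearMap.comp_zero]
        · intro x
          rw [← LinearMap.comp_assoc, cpc_ps, LinearMap.zero_comp]
        · intro a
          rw [LinearMap.comp_assoc, hF.2 a, ← LinearMap.comp_assoc, cps_L0,
            LinearMap.comp_assoc]
      · apply Submodule.mem_sup_right
        rw [mem_homC]
        refine ⟨⟨?_, ?_⟩, ?_⟩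
        · intro x
          rw [LinearMap.comp_assoc, hF.1 x, LinearMap.comp_zero]
        · intro x
          rw [← LinearMap.comp_assoc, cps_pc, LinearMap.zero_comp]
        · intro a
          rw [LinearMap.comp_assoc, hF.2 a, ← LinearMap.comp_assoc, cpc_L0,
            LinearMap.comp_assoc]
  -- step 3 : homB ≃ homW0 via composition with G
  have hfinrankBW0 : Module.finrank ℂ homB = Module.finrank ℂ homW0 := by
    set Geq : ∀ x, (Fin (β x) → ℂ) ≃ₗ[ℂ] (Fin (β x) → ℂ) :=
      fun x => LinearEquiv.ofLinear (G x) (Gi x) (hGGi x) (hGiG x) with hGeq_def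
    set Ψ : EndF β ≃ₗ[ℂ] EndF β :=
      LinearEquiv.piCongrRight (fun x => (LinearEquiv.refl ℂ _).arrowCongr (Geq x)) with hΨ_def
    have hΨapp : ∀ (F : EndF β) (x : Q0), (Ψ F) x = G x ∘ₗ F x := by
      intro F x
      apply LinearMap.ext
      intro v
      simp [hΨ_def, hGeq_def, LinearEquiv.arrowCongr_apply]
    have hΨsymm : ∀ (H : EndF β) (x : Q0), (Ψ.symm H) x = Gi x ∘ₗ H x := by
      intro H x
      apply LinearMap.ext
      intro v
      simp [hΨ_def, hGeq_def, LinearEquiv.arrowCongr_symm_apply]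
    have hmap : Submodule.map (Ψ : EndF β →ₗ[ℂ] EndF β) homB = homW0 := by
      apply le_antisymm
      · rintro _ ⟨F, hF, rfl⟩
        simp only [SetLike.mem_coe] at hF
        rw [mem_homB] at hF
        rw [mem_homW0]
        simp only [LinearEquiv.coe_coe]
        constructor
        · intro x
          rw [hΨapp, LinearMap.comp_assoc, hF.1 x, LinearMap.comp_zero]
        · intro a
          rw [hΨapp, hΨapp, LinearMap.comp_assoc, hF.2 a, ← LinearMap.comp_assoc,
            cL_G, LinearMap.comp_assoc]
      · intro H hH
        rw [mem_homW0] at hH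
        rw [Submodule.mem_map]
        refine ⟨Ψ.symm H, ?_, by simp⟩
        rw [mem_homB]
        constructor
        · intro x
          rw [hΨsymm, LinearMap.comp_assoc, hH.1 x, LinearMap.comp_zero]
        · intro a
          rw [hΨsymm, hΨsymm, LinearMap.comp_assoc, hH.2 a, ← LinearMap.comp_assoc,
            cL0_Gi, LinearMap.comp_assoc]
    rw [← hmap]
    exact (LinearEquiv.finrank_map_eq Ψ homB).symm
  -- step 4 : additivity of finrank
  have hfinrankW0 : Module.finrank ℂ homW0 =
      Module.finrank ℂ homA + Module.finrank ℂ homC := by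
    have := Submodule.finrank_sup_add_finrank_inf_eq homA homC
    rw [hsup, hinf] at this
    simpa using this
  -- step 5 : the left-composition-with-Pc map
  set Φ : EndF β →ₗ[ℂ] EndF β := LinearMap.pi
    (fun x => (LinearMap.llcomp ℂ _ _ _ (PcOf Ps x)).comp (LinearMap.proj x)) with hΦ_def
  have hΦapp : ∀ (F : EndF β) (x : Q0), Φ F x = PcOf Ps x ∘ₗ F x := by
    intro F x
    rfl
  have hΦB : ∀ F ∈ homB, Φ F ∈ homC := by
    intro F hF
    rw [mem_homB] at hF
    rw [mem_homC]
    refine ⟨⟨?_, ?_⟩, ?_⟩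
    · intro x
      rw [hΦapp, LinearMap.comp_assoc, hF.1 x, LinearMap.comp_zero]
    · intro x
      rw [hΦapp, ← LinearMap.comp_assoc, cps_pc, LinearMap.zero_comp]
    · intro a
      rw [hΦapp, hΦapp, LinearMap.comp_assoc, hF.2 a, ← LinearMap.comp_assoc,
        cpc_L, LinearMap.comp_assoc]
  have hker1 : ∀ F ∈ homB, Φ F = 0 → F ∈ homA := by
    intro F hFB hFk
    have hFk' : ∀ x, PcOf Ps x ∘ₗ F x = 0 := by
      intro x
      rw [← hΦapp F x, hFk]
      rfl
    rw [mem_homB] at hFB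
    rw [mem_homA]
    exact ⟨⟨hFB.1, hFk'⟩, fun a => (hFB.2 a).trans (valS_key F hFk' a)⟩
  have hker2 : ∀ F ∈ homA, F ∈ homB ∧ Φ F = 0 := by
    intro F hF
    rw [mem_homA] at hF
    constructor
    · rw [mem_homB]
      exact ⟨hF.1.1, fun a => (hF.2 a).trans (valS_key F hF.1.2 a).symm⟩
    · funext x
      rw [hΦapp, hF.1.2 x]
      rfl
  -- step 6 : `Pc` itself lies in `homC`, so it has a preimage
  have hPcC : (fun x => PcOf Ps x) ∈ homC := by
    rw [mem_homC]
    exact ⟨⟨cpc_ps, cps_pc⟩, cpc_L0⟩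
  obtain ⟨F, hFB, hFPc⟩ := abstract_count homA homC homB homW0 Φ hinf hsup hfinrankBW0
    hΦB hker1 hker2 _ hPcC
  rw [mem_homB] at hFB
  refine ⟨F, hFB.1, hFB.2, ?_⟩
  intro x
  rw [← hΦapp F x, hFPc]
end AuxHom

theorem polystable_summand_splits (hQ : NoOrientedCycles tl hd)
    (σ : Q0 → ℝ) (hσ : σ ∈ EffCone tl hd β)
    (W : RepSpace tl hd β) (hW : Polystable σ W)
    (S : ∀ x, Submodule ℂ (Fin (β x) → ℂ)) (hS : IsSubrep W S)
    (hS0 : wt σ (dimVec S) = 0) :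
    IsGradedIso W W 2 ![fun _ => ⊥, S, fun _ => ⊤] := by
  classical
  -- choose projections onto S
  have hcompl : ∀ x, ∃ T, IsCompl (S x) T := fun x => Submodule.exists_isCompl (S x)
  choose T hT using hcompl
  set Ps : EndF β := fun x => (S x).subtype ∘ₗ (S x).linearProjOfIsCompl (T x) (hT x)
    with hPs_def
  have hP : IsProjOn S Ps := by
    constructor
    · intro x v
      exact (S x).coe_mem _
    · intro x v hv
      simp [hPs_def, Submodule.linearProjOfIsCompl_apply_left (hT x) ⟨v, hv⟩]
      exact congrArg Subtype.val (Submodule.linearProjOfIsCompl_apply_left (hT x) ⟨v, hv⟩)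
  set L : RepF tl hd β := linOf W with hL_def
  have hL : ∀ a, ∀ v ∈ S (tl a), L a v ∈ S (hd a) := by
    intro a v hv
    have := hS a v hv
    rwa [mulVec_linOf] at this
  set W0 : RepSpace tl hd β := matOf (L0of Ps L) with hW0_def
  -- the degeneration lies in the orbit of W
  have horbit : W0 ∈ glOrbit W := by
    rw [← hW.2]
    exact ⟨matOf_L0_mem_zClosure W hP hS, semistable_L0 σ W hW.1 hP hS hS0⟩
  obtain ⟨g, hg⟩ := horbit
  set G : EndF β := fun x => Matrix.toLin' ((g x).val) with hG_def
  set Gi : EndF β := fun x => Matrix.toLin' (((g x)⁻¹).val) with hGi_def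
  have hGGi : ∀ x, G x ∘ₗ Gi x = LinearMap.id := by
    intro x
    rw [hG_def, hGi_def, ← Matrix.toLin'_mul, Units.mul_inv, Matrix.toLin'_one]
  have hGiG : ∀ x, Gi x ∘ₗ G x = LinearMap.id := by
    intro x
    rw [hG_def, hGi_def, ← Matrix.toLin'_mul, Units.inv_mul, Matrix.toLin'_one]
  have hconj : ∀ a, L0of Ps L a = G (hd a) ∘ₗ L a ∘ₗ Gi (tl a) := by
    intro a
    have h1 : W0 a = (g (hd a)).val * W a * ((g (tl a))⁻¹).val := congrFun hg a
    have h2 := congrArg Matrix.toLin' h1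
    rw [Matrix.toLin'_mul, Matrix.toLin'_mul] at h2
    have h3 : Matrix.toLin' (W0 a) = L0of Ps L a := by
      rw [hW0_def]
      exact Matrix.toLin'_toMatrix' _
    rw [h3] at h2
    rw [h2, hL_def]
    rfl
  obtain ⟨F, hF1, hF2, hF3⟩ := exists_splitting_hom hP hL G Gi hGGi hGiG hconj
  -- pointwise versions
  have pcF : ∀ x v, PcOf Ps x (F x v) = PcOf Ps x v := by
    intro x v
    exact congrFun (congrArg DFunLike.coe (hF3 x)) v
  have hFPs : ∀ x v, F x (Ps x v) = 0 := by
    intro x v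
    exact congrFun (congrArg DFunLike.coe (hF1 x)) v
  have hFeqv : ∀ a v, F (hd a) (L0of Ps L a v) = L a (F (tl a) v) := by
    intro a v
    exact congrFun (congrArg DFunLike.coe (hF2 a)) v
  -- the graded isomorphism
  refine ⟨![fun x => LinearMap.id, fun x => F x ∘ₗ PcOf Ps x], ?_, ?_, ?_, ?_, ?_⟩
  · intro i x v hv
    fin_cases i <;>
      simp only [Fin.zero_eta, Fin.mk_one, Fin.castSucc_zero, Fin.castSucc_one,
        Matrix.cons_val_zero, Matrix.cons_val_one, Matrix.head_cons,
        Matrix.cons_val_fin_one] at hv ⊢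
    · simp only [Submodule.mem_bot] at hv
      simp [hv]
    · have : PcOf Ps x v = 0 := (pc_eq_zero_iff hP x v).2 hv
      simp [this]
  · intro i x v hv hv0
    fin_cases i <;>
      simp only [Fin.zero_eta, Fin.mk_one, Fin.castSucc_zero, Fin.castSucc_one,
        Fin.succ_zero_eq_one, Fin.succ_one_eq_two,
        Matrix.cons_val_zero, Matrix.cons_val_one, Matrix.head_cons] at hv hv0 ⊢
    · simpa using hv0
    · have h1 : PcOf Ps x (F x (PcOf Ps x v)) = 0 := by
        simp only [LinearMap.comp_apply] at hv0
        rw [hv0, map_zero]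
      rw [pcF, pc_pc hP] at h1
      exact (pc_eq_zero_iff hP x v).1 h1
  · intro i a v hv
    fin_cases i <;>
      simp only [Fin.zero_eta, Fin.mk_one, Matrix.cons_val_zero, Matrix.cons_val_one,
        Matrix.head_cons] <;> rw [mulVec_linOf, mulVec_linOf]
    · simp
    · simp only [LinearMap.comp_apply, LinearMap.id_apply]
      rw [← hL_def, pc_L hP hL, hFeqv]
  · intro x
    apply (iSupIndep_pair (show (0 : Fin 2) ≠ 1 by decide) (by decide)).mpr
    simp only [Fin.isValue, Fin.succ_zero_eq_one, Fin.succ_one_eq_two,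
      Matrix.cons_val_zero, Matrix.cons_val_one, Matrix.head_cons, Matrix.cons_val_two,
      Matrix.tail_cons, Submodule.map_id, Submodule.map_top]
    rw [Submodule.disjoint_def]
    intro v hvS hvR
    rw [LinearMap.mem_range] at hvR
    obtain ⟨u, hu⟩ := hvR
    have h0 : PcOf Ps x v = 0 := (pc_eq_zero_iff hP x v).2 hvS
    rw [← hu, LinearMap.comp_apply, pcF, pc_pc hP] at h0
    rw [← hu, LinearMap.comp_apply, h0, map_zero]
  · intro x
    rw [eq_top_iff]
    intro v _
    have hv1 : v - F x (PcOf Ps x v) ∈ S x := by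
      rw [← pc_eq_zero_iff hP x, map_sub, pcF, pc_pc hP, sub_self]
    have hm1 : v - F x (PcOf Ps x v) ∈
        (![fun _ => ⊥, S, fun _ => ⊤] ((0 : Fin 2).succ) x).map
          ((![fun x => LinearMap.id, fun x => F x ∘ₗ PcOf Ps x] : ∀ _ : Fin 2,
            ∀ x, (Fin (β x) → ℂ) →ₗ[ℂ] (Fin (β x) → ℂ)) 0 x) := by
      simp only [Fin.isValue, Fin.succ_zero_eq_one, Matrix.cons_val_zero,
        Matrix.cons_val_one, Matrix.head_cons, Submodule.map_id]
      exact hv1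
    have hm2 : F x (PcOf Ps x v) ∈
        (![fun _ => ⊥, S, fun _ => ⊤] ((1 : Fin 2).succ) x).map
          ((![fun x => LinearMap.id, fun x => F x ∘ₗ PcOf Ps x] : ∀ _ : Fin 2,
            ∀ x, (Fin (β x) → ℂ) →ₗ[ℂ] (Fin (β x) → ℂ)) 1 x) := by
      simp only [Fin.isValue, Fin.succ_one_eq_two, Matrix.cons_val_one, Matrix.head_cons,
        Matrix.cons_val_two, Matrix.tail_cons, Submodule.map_top, LinearMap.mem_range]
      exact ⟨v, rfl⟩
    have h1 := le_iSup (fun i : Fin 2 =>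
      (![fun _ => ⊥, S, fun _ => ⊤] (Fin.succ i) x).map
        ((![fun x => LinearMap.id, fun x => F x ∘ₗ PcOf Ps x] : ∀ _ : Fin 2,
          ∀ x, (Fin (β x) → ℂ) →ₗ[ℂ] (Fin (β x) → ℂ)) i x)) 0 hm1
    have h2 := le_iSup (fun i : Fin 2 =>
      (![fun _ => ⊥, S, fun _ => ⊤] (Fin.succ i) x).map
        ((![fun x => LinearMap.id, fun x => F x ∘ₗ PcOf Ps x] : ∀ _ : Fin 2,
          ∀ x, (Fin (β x) → ℂ) →ₗ[ℂ] (Fin (β x) → ℂ)) i x)) 1 hm2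
    have := Submodule.add_mem _ h1 h2
    simpa using this

end

end QuiverGIT
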